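/- Let G be a graph admitting a connected partition (V_1,...,V_ℓ) of width k that is f-flat. Then for every positive integer r, the strong r-coloring number satisfies col_r(G) ≤ (k+1)·f(r). -/

import Mathlib

variable {V : Type*}

/-- Strong r-reachability. -/
def SReach (G : SimpleGraph V) (π : LinearOrder V) (r : ℕ) (v : V) : Set V :=
  letI := π
  {u | u ≤ v ∧ ∃ p : G.Walk v u, p.IsPath ∧ p.length ≤ r ∧
      ∀ w ∈ p.support, w ≠ v → w ≠ u → v < w}

noncomputable def scol [Fintype V] (G : SimpleGraph V) (r : ℕ) : ℕ :=
  sInf {k | ∃ π : LinearOrder V, ∀ v, (SReach G π r v).ncard ≤ k}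

private lemma ncard_sub_biUnion {α β : Type*} [Fintype α] (s : Set α) (t : Set β)
    (ht : t.Finite) (A : β → Set α) (m : ℕ)
    (hsub : s ⊆ ⋃ j ∈ t, A j) (hm : ∀ j, (A j).ncard ≤ m) :
    s.ncard ≤ t.ncard * m := by
  classical
  set T := ht.toFinset with hT
  set B : β → Finset α := fun j => (A j).toFinite.toFinset with hB
  have hsub' : s ⊆ ↑(T.biUnion B) := by
    intro x hx
    obtain ⟨j, hj, hxj⟩ := Set.mem_iUnion₂.1 (hsub hx)
    simp only [Finset.coe_biUnion, Set.mem_iUnion]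
    exact ⟨j, by simpa [hT] using hj, by simpa [hB] using hxj⟩
  calc s.ncard ≤ (↑(T.biUnion B) : Set α).ncard :=
        Set.ncard_le_ncard hsub' (Set.toFinite _)
    _ = (T.biUnion B).card := Set.ncard_coe_finset _
    _ ≤ ∑ j ∈ T, (B j).card := Finset.card_biUnion_le
    _ ≤ T.card * m := by
        refine le_trans (Finset.sum_le_card_nsmul T _ m ?_) (by simp [smul_eq_mul])
        intro j _
        have h : (B j : Set α).ncard = (B j).card := Set.ncard_coe_finset _
        rw [← h]
        simpa [hB, Set.Finite.coe_toFinset] using hm j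
    _ = t.ncard * m := by rw [Set.ncard_eq_toFinset_card _ ht]

/-- If `G` admits an `f`-flat connected ordered partition `(P 0, …, P (ℓ-1))` of width `k`
(with `Q` the quotient minor obtained by contracting the parts), then
`col_r(G) ≤ (k+1)·f(r)`. -/
theorem stmt11 [Fintype V] (G : SimpleGraph V) (ℓ k : ℕ) (f : ℕ → ℕ)
    (P : Fin ℓ → Set V)
    (hcover : ∀ v : V, ∃ i, v ∈ P i)
    (hdisj : ∀ i j, i ≠ j → Disjoint (P i) (P j))
    (hconn : ∀ i, (P i).Nonempty ∧
      ∀ u ∈ P i, ∀ v ∈ P i, ∃ p : G.Walk u v, ∀ x ∈ p.support, x ∈ P i)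
    (Q : SimpleGraph (Fin ℓ))
    (hQ : ∀ i j, Q.Adj i j ↔ i ≠ j ∧ ∃ u ∈ P i, ∃ v ∈ P j, G.Adj u v)
    -- the width of the partition (maximum back-degree in the fill-in graph of `Q`,
    -- characterized via paths whose internal vertices come later in the order) is at most `k`
    (hwidth : ∀ i : Fin ℓ,
      {j | j < i ∧ ∃ q : Q.Walk i j, q.IsPath ∧ ∀ x ∈ q.support, x ≠ j → i ≤ x}.ncard ≤ k)
    -- each part `P i` `f`-spreads in `G` minus the earlier parts
    (hflat : ∀ (r : ℕ) (i : Fin ℓ) (v : V),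
      {w | w ∈ P i ∧ ∃ p : G.Walk v w, p.length ≤ r ∧
        ∀ x ∈ p.support, ∀ j, j < i → x ∉ P j}.ncard ≤ f r)
    (r : ℕ) (hr : 0 < r) :
    scol G r ≤ (k + 1) * f r := by
  classical
  choose idx hidx using hcover
  have huniq : ∀ (x : V) (j : Fin ℓ), x ∈ P j → j = idx x := by
    intro x j hx
    by_contra h
    exact Set.disjoint_left.1 (hdisj j (idx x) h) hx (hidx x)
  -- the order
  set n := Fintype.card V with hn
  set e := Fintype.equivFin V with he
  set fo : V → Lex (Fin ℓ × Fin n) := fun v => toLex (idx v, e v) with hfo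
  have hinj : Function.Injective fo := by
    intro a b h
    have h2 : (ofLex (fo a)).2 = (ofLex (fo b)).2 := by rw [h]
    exact e.injective h2
  set π : LinearOrder V := LinearOrder.lift' fo hinj with hπ
  have hle : ∀ u v : V, fo u ≤ fo v ↔ (idx u < idx v ∨ (idx u = idx v ∧ e u ≤ e v)) :=
    fun u v => Prod.Lex.le_iff
  have hlt : ∀ u v : V, fo u < fo v ↔ (idx u < idx v ∨ (idx u = idx v ∧ e u < e v)) :=
    fun u v => Prod.Lex.lt_iff
  -- projecting walks to Q
  have qwalk : ∀ (a b : V) (p : G.Walk a b), ∃ q : Q.Walk (idx a) (idx b),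
      ∀ x ∈ q.support, ∃ y ∈ p.support, idx y = x := by
    intro a b p
    induction p with
    | nil => exact ⟨.nil, by simp⟩
    | @cons a c b h p ih =>
      obtain ⟨q, hq⟩ := ih
      by_cases heq : idx a = idx c
      · refine ⟨q.copy heq.symm rfl, ?_⟩
        intro x hx
        rw [SimpleGraph.Walk.support_copy] at hx
        obtain ⟨y, hy, hxy⟩ := hq x hx
        exact ⟨y, by simp [SimpleGraph.Walk.support_cons, hy], hxy⟩
      · have hadj : Q.Adj (idx a) (idx c) :=
          (hQ _ _).2 ⟨heq, a, hidx a, c, hidx c, h⟩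
        refine ⟨SimpleGraph.Walk.cons hadj q, ?_⟩
        intro x hx
        rw [SimpleGraph.Walk.support_cons, List.mem_cons] at hx
        rcases hx with rfl | hx
        · exact ⟨a, by simp [SimpleGraph.Walk.support_cons], rfl⟩
        · obtain ⟨y, hy, hxy⟩ := hq x hx
          exact ⟨y, by simp [SimpleGraph.Walk.support_cons, hy], hxy⟩
  have key : ∀ v : V, (SReach G π r v).ncard ≤ (k + 1) * f r := by
    intro v
    set i := idx v with hiv
    set S : Set (Fin ℓ) :=
      {j | j < i ∧ ∃ q : Q.Walk i j, q.IsPath ∧ ∀ x ∈ q.support, x ≠ j → i ≤ x} with hS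
    set A : Fin ℓ → Set V := fun j => {w | w ∈ P j ∧ ∃ p : G.Walk v w, p.length ≤ r ∧
        ∀ x ∈ p.support, ∀ j', j' < j → x ∉ P j'} with hA
    have hsub : SReach G π r v ⊆ ⋃ j ∈ insert i S, A j := by
      intro u hu
      obtain ⟨hle_uv, p, hp, hlen, hint⟩ := hu
      have hle_uv' : fo u ≤ fo v := hle_uv
      have claimA : ∀ x ∈ p.support, x ≠ u → i ≤ idx x := by
        intro x hx hxu
        by_cases hxv : x = v
        · subst hxv; exact le_refl _
        · have hvx : fo v < fo x := hint x hx hxv hxu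
          rcases (hlt v x).1 hvx with h | h
          · exact h.le
          · exact h.1.le
      have hju : idx u ≤ i := by
        rcases (hle u v).1 hle_uv' with h | h
        · exact h.le
        · exact h.1.le
      have hmemA : u ∈ A (idx u) := by
        refine ⟨hidx u, p, hlen, ?_⟩
        intro x hx j' hj' hxP
        have hji : j' = idx x := huniq x j' hxP
        subst hji
        by_cases hxu : x = u
        · subst hxu; exact lt_irrefl _ hj'
        · exact lt_irrefl _ (lt_of_lt_of_le hj' (le_trans hju (claimA x hx hxu)))
      rcases eq_or_lt_of_le hju with heq | hlt'
      · exact Set.mem_biUnion (Set.mem_insert _ _) (heq ▸ hmemA)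
      · have hSmem : idx u ∈ S := by
          obtain ⟨q, hq⟩ := qwalk v u p
          refine ⟨hlt', q.bypass, q.bypass_isPath, ?_⟩
          intro x hx hxj
          obtain ⟨y, hy, hxy⟩ := hq x (q.support_bypass_subset hx)
          by_cases hyu : y = u
          · exact absurd (hyu ▸ hxy).symm hxj
          · exact hxy ▸ claimA y hy hyu
        exact Set.mem_biUnion (Set.mem_insert_of_mem _ hSmem) hmemA
    have hcount := ncard_sub_biUnion (SReach G π r v) (insert i S) (Set.toFinite _)
      A (f r) hsub (fun j => hflat r j v)
    refine le_trans hcount (Nat.mul_le_mul_right _ ?_)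
    calc (insert i S).ncard ≤ S.ncard + 1 := Set.ncard_insert_le _ _
      _ ≤ k + 1 := by
          have hSk : S.ncard ≤ k := by rw [hS]; exact hwidth i
          omega
  have : (k + 1) * f r ∈ {m | ∃ π : LinearOrder V, ∀ v, (SReach G π r v).ncard ≤ m} :=
    ⟨π, key⟩
  exact Nat.sInf_le this
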